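/- arXiv:0904.3460 — 4 statements merged into one kernel-verified Lean document; each statement's English description precedes it below -/
import Mathlib

section
/- Let f : ℝ → ℝ be four times continuously differentiable on an open interval containing α with f(α) = 0 and f'(α) ≠ 0. Define y(x) = x - f(x)/f'(x) and the midpoint-Newton iterate M(x) = x - f(x)/f'((x + y(x))/2). Then there exist a neighborhood U of α and C > 0 such that for all x ∈ U where the iterate is defined, |M(x) - α| ≤ C·|x - α|³. -/
open Set Metric

lemma abs_sub_le_of_mem_segment {a b t : ℝ} (ht : t ∈ segment ℝ a b) :
    |t - a| ≤ |b - a| := by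
  obtain ⟨u, v, hu, hv, huv, rfl⟩ := ht
  have hu1 : u = 1 - v := by linarith
  have h1 : u • a + v • b - a = v * (b - a) := by
    simp only [smul_eq_mul, hu1]; ring
  rw [h1, abs_mul, abs_of_nonneg hv]
  exact mul_le_of_le_one_left (abs_nonneg _) (by linarith)

lemma mvt_abs (g g' : ℝ → ℝ) {K : Set ℝ} (hK : Convex ℝ K)
    (hg : ∀ t ∈ K, HasDerivAt g (g' t) t) {C : ℝ} (hC : ∀ t ∈ K, |g' t| ≤ C)
    {a b : ℝ} (ha : a ∈ K) (hb : b ∈ K) : |g b - g a| ≤ C * |b - a| := by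
  simpa using hK.norm_image_sub_le_of_norm_hasDerivWithin_le
    (fun t ht => (hg t ht).hasDerivWithinAt) (by simpa using hC) ha hb

lemma taylor1_abs (g g' g'' : ℝ → ℝ) {K : Set ℝ} (hK : Convex ℝ K)
    (hg : ∀ t ∈ K, HasDerivAt g (g' t) t) (hg' : ∀ t ∈ K, HasDerivAt g' (g'' t) t)
    {C : ℝ} (hC : ∀ t ∈ K, |g'' t| ≤ C) {a b : ℝ} (ha : a ∈ K) (hb : b ∈ K) :
    |g b - g a - g' a * (b - a)| ≤ C * |b - a| ^ 2 := by
  have hC0 : 0 ≤ C := le_trans (abs_nonneg _) (hC a ha)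
  have hS : segment ℝ a b ⊆ K := hK.segment_subset ha hb
  have key : |(g b - g' a * b) - (g a - g' a * a)| ≤ (C * |b - a|) * |b - a| := by
    refine mvt_abs (fun t => g t - g' a * t) (fun t => g' t - g' a) (convex_segment a b)
      (fun t ht => ?_) (fun t ht => ?_) (left_mem_segment ℝ a b) (right_mem_segment ℝ a b)
    · have := (hg t (hS ht)).sub ((hasDerivAt_id t).const_mul (g' a))
      simp only [mul_one] at this; exact this
    · calc |g' t - g' a| ≤ C * |t - a| := mvt_abs g' g'' hK hg' hC ha (hS ht)
        _ ≤ C * |b - a| := by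
            exact mul_le_mul_of_nonneg_left (abs_sub_le_of_mem_segment ht) hC0
  calc |g b - g a - g' a * (b - a)| = |(g b - g' a * b) - (g a - g' a * a)| := by ring_nf
    _ ≤ (C * |b - a|) * |b - a| := key
    _ = C * |b - a| ^ 2 := by ring

lemma taylor2_abs (g g' g'' g''' : ℝ → ℝ) {K : Set ℝ} (hK : Convex ℝ K)
    (hg : ∀ t ∈ K, HasDerivAt g (g' t) t) (hg' : ∀ t ∈ K, HasDerivAt g' (g'' t) t)
    (hg'' : ∀ t ∈ K, HasDerivAt g'' (g''' t) t)
    {C : ℝ} (hC : ∀ t ∈ K, |g''' t| ≤ C) {c b : ℝ} (hc : c ∈ K) (hb : b ∈ K) :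
    |g b - g c - g' c * (b - c) - g'' c * (b - c) ^ 2 / 2| ≤ C * |b - c| ^ 3 := by
  have hC0 : 0 ≤ C := le_trans (abs_nonneg _) (hC c hc)
  have hS : segment ℝ c b ⊆ K := hK.segment_subset hc hb
  have key : |(g b - g' c * b - g'' c * (b - c) ^ 2 / 2) -
      (g c - g' c * c - g'' c * (c - c) ^ 2 / 2)| ≤ (C * |b - c| ^ 2) * |b - c| := by
    refine mvt_abs (fun t => g t - g' c * t - g'' c * (t - c) ^ 2 / 2)
      (fun t => g' t - g' c - g'' c * (t - c)) (convex_segment c b)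
      (fun t ht => ?_) (fun t ht => ?_) (left_mem_segment ℝ c b) (right_mem_segment ℝ c b)
    · have h1 : HasDerivAt (fun t : ℝ => g'' c * (t - c) ^ 2 / 2) (g'' c * (t - c)) t := by
        have := (((hasDerivAt_id t).sub_const c).pow 2).const_mul (g'' c)
        have h2 := this.div_const 2
        refine h2.congr_deriv ?_
        simp only [id_eq]
        push_cast
        ring
      have := ((hg t (hS ht)).sub ((hasDerivAt_id t).const_mul (g' c))).sub h1
      simp only [mul_one] at this; exact this
    · calc |g' t - g' c - g'' c * (t - c)| ≤ C * |t - c| ^ 2 :=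
            taylor1_abs g' g'' g''' hK hg' hg'' hC hc (hS ht)
        _ ≤ C * |b - c| ^ 2 := by
            refine mul_le_mul_of_nonneg_left ?_ hC0
            exact pow_le_pow_left₀ (abs_nonneg _) (abs_sub_le_of_mem_segment ht) 2
  calc |g b - g c - g' c * (b - c) - g'' c * (b - c) ^ 2 / 2|
      = |(g b - g' c * b - g'' c * (b - c) ^ 2 / 2) -
        (g c - g' c * c - g'' c * (c - c) ^ 2 / 2)| := by ring_nf
    _ ≤ (C * |b - c| ^ 2) * |b - c| := key
    _ = C * |b - c| ^ 3 := by ring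

set_option maxHeartbeats 2000000 in
theorem midpoint_newton_cubic_convergence
    (f : ℝ → ℝ) (α : ℝ) (s : Set ℝ) (hs : IsOpen s) (hαs : α ∈ s)
    (hf : ContDiffOn ℝ 4 f s) (hroot : f α = 0) (hder : deriv f α ≠ 0) :
    ∃ U ∈ nhds α, ∃ C > (0:ℝ), ∀ x ∈ U,
      deriv f x ≠ 0 →
      deriv f ((x + (x - f x / deriv f x)) / 2) ≠ 0 →
      |(x - f x / deriv f ((x + (x - f x / deriv f x)) / 2)) - α| ≤ C * |x - α| ^ 3 := by
  set f₁ := deriv f with hf₁def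
  have hf₁ : ContDiffOn ℝ 3 f₁ s := hf.deriv_of_isOpen hs (by norm_num)
  have hf₂ : ContDiffOn ℝ 2 (deriv f₁) s := hf₁.deriv_of_isOpen hs (by norm_num)
  have hf₃ : ContDiffOn ℝ 1 (deriv (deriv f₁)) s := hf₂.deriv_of_isOpen hs (by norm_num)
  have hD : ∀ t ∈ s, HasDerivAt f (f₁ t) t := fun t ht =>
    ((hf.differentiableOn (by norm_num)).differentiableAt (hs.mem_nhds ht)).hasDerivAt
  have hD1 : ∀ t ∈ s, HasDerivAt f₁ (deriv f₁ t) t := fun t ht =>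
    ((hf₁.differentiableOn (by norm_num)).differentiableAt (hs.mem_nhds ht)).hasDerivAt
  have hD2 : ∀ t ∈ s, HasDerivAt (deriv f₁) (deriv (deriv f₁) t) t := fun t ht =>
    ((hf₂.differentiableOn (by norm_num)).differentiableAt (hs.mem_nhds ht)).hasDerivAt
  set d : ℝ := |f₁ α| / 2 with hddef
  have hd : 0 < d := half_pos (abs_pos.mpr hder)
  -- find a closed ball where |f₁| ≥ d
  have hcont : ContinuousAt f₁ α := hf₁.continuousOn.continuousAt (hs.mem_nhds hαs)
  have habs : Filter.Tendsto (fun t => |f₁ t|) (nhds α) (nhds |f₁ α|) := hcont.abs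
  have hev : ∀ᶠ t in nhds α, d < |f₁ t| := habs.eventually_const_lt (by rw [hddef]; linarith)
  have hmem : s ∩ {t | d < |f₁ t|} ∈ nhds α :=
    Filter.inter_mem (hs.mem_nhds hαs) hev
  obtain ⟨r₀, hr₀pos, hball⟩ := Metric.nhds_basis_closedBall.mem_iff.mp hmem
  set K : Set ℝ := closedBall α r₀ with hKdef
  have hKconv : Convex ℝ K := convex_closedBall α r₀
  have hKs : K ⊆ s := fun t ht => (hball ht).1
  have hKd : ∀ t ∈ K, d ≤ |f₁ t| := fun t ht => (hball ht).2.le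
  have hKne : ∀ t ∈ K, f₁ t ≠ 0 := fun t ht h0 => by
    have := hKd t ht; rw [h0] at this; simp at this; linarith
  have hαK : α ∈ K := mem_closedBall_self hr₀pos.le
  have hcomp : IsCompact K := isCompact_closedBall α r₀
  obtain ⟨B₁, hB₁'⟩ := hcomp.exists_bound_of_continuousOn (hf₁.continuousOn.mono hKs)
  obtain ⟨B₂, hB₂'⟩ := hcomp.exists_bound_of_continuousOn (hf₂.continuousOn.mono hKs)
  obtain ⟨B₃, hB₃'⟩ := hcomp.exists_bound_of_continuousOn (hf₃.continuousOn.mono hKs)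
  have hB₁ : ∀ t ∈ K, |f₁ t| ≤ B₁ := by simpa [Real.norm_eq_abs] using hB₁'
  have hB₂ : ∀ t ∈ K, |deriv f₁ t| ≤ B₂ := by simpa [Real.norm_eq_abs] using hB₂'
  have hB₃ : ∀ t ∈ K, |deriv (deriv f₁) t| ≤ B₃ := by simpa [Real.norm_eq_abs] using hB₃'
  have hB₁0 : 0 ≤ B₁ := le_trans (abs_nonneg _) (hB₁ α hαK)
  have hB₂0 : 0 ≤ B₂ := le_trans (abs_nonneg _) (hB₂ α hαK)
  have hB₃0 : 0 ≤ B₃ := le_trans (abs_nonneg _) (hB₃ α hαK)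
  have hDK : ∀ t ∈ K, HasDerivAt f (f₁ t) t := fun t ht => hD t (hKs ht)
  have hD1K : ∀ t ∈ K, HasDerivAt f₁ (deriv f₁ t) t := fun t ht => hD1 t (hKs ht)
  have hD2K : ∀ t ∈ K, HasDerivAt (deriv f₁) (deriv (deriv f₁) t) t := fun t ht => hD2 t (hKs ht)
  -- choice of radius
  set r : ℝ := min r₀ (2 * d * r₀ / (2 * d + B₁)) with hrdef
  have hrpos : 0 < r := lt_min hr₀pos (by positivity)
  have hrr₀ : r ≤ r₀ := min_le_left _ _
  refine ⟨ball α r, ball_mem_nhds α hrpos, (B₃ + B₂ ^ 2 / (2 * d)) / d + 1, by positivity,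
    fun x hx _ _ => ?_⟩
  have hxK : x ∈ K := by
    have := mem_ball.mp hx
    rw [hKdef, mem_closedBall, Real.dist_eq]
    rw [Real.dist_eq] at this
    linarith
  -- basic abbreviations
  set y : ℝ := x - f x / f₁ x with hydef
  set c : ℝ := (x + α) / 2 with hcdef
  set mx : ℝ := (x + y) / 2 with hmxdef
  have hxd : |x - α| < r := by have := mem_ball.mp hx; rwa [Real.dist_eq] at this
  have hcK : c ∈ K := by
    rw [hKdef, mem_closedBall, Real.dist_eq]
    have : c - α = (x - α) / 2 := by rw [hcdef]; ring
    rw [this, abs_div]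
    have h2 : |(2:ℝ)| = 2 := by norm_num
    rw [h2]
    nlinarith [abs_nonneg (x - α)]
  -- bound on |f x|
  have hfx : |f x| ≤ B₁ * |x - α| := by
    have := mvt_abs f f₁ hKconv hDK hB₁ hαK hxK
    rwa [hroot, sub_zero] at this
  -- Newton quadratic bound
  have hfx1 : d ≤ |f₁ x| := hKd x hxK
  have hfx1ne : f₁ x ≠ 0 := hKne x hxK
  have hnum : |f₁ x * (x - α) - f x| ≤ B₂ * |x - α| ^ 2 := by
    have h := taylor1_abs f f₁ (deriv f₁) hKconv hDK hD1K hB₂ hxK hαK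
    have heq : f α - f x - f₁ x * (α - x) = f₁ x * (x - α) - f x := by rw [hroot]; ring
    rw [heq, abs_sub_comm α x] at h
    exact h
  have hy : |y - α| ≤ B₂ / d * |x - α| ^ 2 := by
    have hrepr : y - α = (f₁ x * (x - α) - f x) / f₁ x := by
      rw [hydef]; field_simp; ring
    rw [hrepr, abs_div, div_le_iff₀ (lt_of_lt_of_le hd hfx1)]
    calc |f₁ x * (x - α) - f x| ≤ B₂ * |x - α| ^ 2 := hnum
      _ = B₂ / d * |x - α| ^ 2 * d := by field_simp
      _ ≤ B₂ / d * |x - α| ^ 2 * |f₁ x| := by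
          refine mul_le_mul_of_nonneg_left hfx1 ?_
          positivity
  -- crude bound on |y - α|
  have hycrude : |y - α| ≤ (1 + B₁ / d) * |x - α| := by
    have h1 : |y - α| ≤ |x - α| + |f x| / |f₁ x| := by
      have : y - α = (x - α) - f x / f₁ x := by rw [hydef]; ring
      rw [this]
      calc |(x - α) - f x / f₁ x| ≤ |x - α| + |f x / f₁ x| := abs_sub _ _
        _ = |x - α| + |f x| / |f₁ x| := by rw [abs_div]
    have h2 : |f x| / |f₁ x| ≤ B₁ * |x - α| / d := by
      exact div_le_div₀ (by positivity) hfx hd hfx1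
    calc |y - α| ≤ |x - α| + B₁ * |x - α| / d := by linarith
      _ = (1 + B₁ / d) * |x - α| := by field_simp
  have hmxbound : |mx - α| ≤ (2 * d + B₁) / (2 * d) * |x - α| := by
    have h1 : mx - α = ((x - α) + (y - α)) / 2 := by rw [hmxdef]; ring
    rw [h1]
    calc |((x - α) + (y - α)) / 2| ≤ (|x - α| + |y - α|) / 2 := by
          rw [abs_div, abs_two]
          linarith [abs_add_le (x - α) (y - α)]
      _ ≤ (|x - α| + (1 + B₁ / d) * |x - α|) / 2 := by linarith
      _ = (2 * d + B₁) / (2 * d) * |x - α| := by field_simp; ring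
  have hmxK : mx ∈ K := by
    rw [hKdef, mem_closedBall, Real.dist_eq]
    have hr2 : r ≤ 2 * d * r₀ / (2 * d + B₁) := min_le_right _ _
    have h2d : (0:ℝ) < 2 * d + B₁ := by linarith
    have : (2 * d + B₁) / (2 * d) * |x - α| ≤ (2 * d + B₁) / (2 * d) * r := by
      apply mul_le_mul_of_nonneg_left hxd.le
      positivity
    have hfin : (2 * d + B₁) / (2 * d) * r ≤ r₀ := by
      rw [div_mul_eq_mul_div, div_le_iff₀ (by linarith : (0:ℝ) < 2 * d)]
      calc (2 * d + B₁) * r ≤ (2 * d + B₁) * (2 * d * r₀ / (2 * d + B₁)) := by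
            exact mul_le_mul_of_nonneg_left hr2 h2d.le
        _ = r₀ * (2 * d) := by field_simp
    linarith [hmxbound]
  have hmx1 : d ≤ |f₁ mx| := hKd mx hmxK
  have hmx1ne : f₁ mx ≠ 0 := hKne mx hmxK
  -- midpoint rule bound
  have hmid : |f x - f₁ c * (x - α)| ≤ B₃ / 4 * |x - α| ^ 3 := by
    have t1 := taylor2_abs f f₁ (deriv f₁) (deriv (deriv f₁)) hKconv hDK hD1K hD2K hB₃ hcK hxK
    have t2 := taylor2_abs f f₁ (deriv f₁) (deriv (deriv f₁)) hKconv hDK hD1K hD2K hB₃ hcK hαK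
    have hxc : x - c = (x - α) / 2 := by rw [hcdef]; ring
    have hαc : α - c = -((x - α) / 2) := by rw [hcdef]; ring
    have habs1 : |x - c| = |x - α| / 2 := by rw [hxc, abs_div]; norm_num
    have habs2 : |α - c| = |x - α| / 2 := by rw [hαc, abs_neg, abs_div]; norm_num
    have heq : f x - f₁ c * (x - α) =
        (f x - f c - f₁ c * (x - c) - deriv f₁ c * (x - c) ^ 2 / 2) -
        (f α - f c - f₁ c * (α - c) - deriv f₁ c * (α - c) ^ 2 / 2) := by
      rw [hroot, hxc, hαc]; ring
    rw [heq]
    calc |(f x - f c - f₁ c * (x - c) - deriv f₁ c * (x - c) ^ 2 / 2) -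
        (f α - f c - f₁ c * (α - c) - deriv f₁ c * (α - c) ^ 2 / 2)|
        ≤ |f x - f c - f₁ c * (x - c) - deriv f₁ c * (x - c) ^ 2 / 2| +
          |f α - f c - f₁ c * (α - c) - deriv f₁ c * (α - c) ^ 2 / 2| := abs_sub _ _
      _ ≤ B₃ * |x - c| ^ 3 + B₃ * |α - c| ^ 3 := add_le_add t1 t2
      _ = B₃ / 4 * |x - α| ^ 3 := by rw [habs1, habs2]; ring
  -- Lipschitz correction term
  have hlip : |f₁ c - f₁ mx| ≤ B₂ * (B₂ / d * |x - α| ^ 2) / 2 := by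
    have h1 := mvt_abs f₁ (deriv f₁) hKconv hD1K hB₂ hmxK hcK
    have h2 : c - mx = -((y - α) / 2) := by rw [hcdef, hmxdef]; ring
    have h3 : |c - mx| = |y - α| / 2 := by rw [h2, abs_neg, abs_div]; norm_num
    calc |f₁ c - f₁ mx| ≤ B₂ * |c - mx| := h1
      _ = B₂ * |y - α| / 2 := by rw [h3]; ring
      _ ≤ B₂ * (B₂ / d * |x - α| ^ 2) / 2 := by nlinarith [hy, hB₂0, abs_nonneg (y - α)]
  -- final combination
  have hgoalrepr : x - f x / f₁ mx - α = (f₁ mx * (x - α) - f x) / f₁ mx := by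
    field_simp; ring
  have hnum2 : |f₁ mx * (x - α) - f x| ≤ (B₃ + B₂ ^ 2 / (2 * d)) * |x - α| ^ 3 := by
    have heq : f₁ mx * (x - α) - f x =
        -((f x - f₁ c * (x - α)) + (f₁ c - f₁ mx) * (x - α)) := by ring
    rw [heq, abs_neg]
    calc |(f x - f₁ c * (x - α)) + (f₁ c - f₁ mx) * (x - α)|
        ≤ |f x - f₁ c * (x - α)| + |f₁ c - f₁ mx| * |x - α| := by
          rw [← abs_mul]; exact abs_add_le _ _
      _ ≤ B₃ / 4 * |x - α| ^ 3 + (B₂ * (B₂ / d * |x - α| ^ 2) / 2) * |x - α| := by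
          refine add_le_add hmid (mul_le_mul_of_nonneg_right hlip (abs_nonneg _))
      _ ≤ (B₃ + B₂ ^ 2 / (2 * d)) * |x - α| ^ 3 := by
          have h1 : ∀ A : ℝ, B₂ * (B₂ / d * A ^ 2) / 2 * A = B₂ ^ 2 / (2 * d) * A ^ 3 := by
            intro A; field_simp
          rw [h1]
          nlinarith [abs_nonneg (x - α), hB₃0, pow_nonneg (abs_nonneg (x - α)) 3]
  rw [hgoalrepr, abs_div, div_le_iff₀ (lt_of_lt_of_le hd hmx1)]
  calc |f₁ mx * (x - α) - f x| ≤ (B₃ + B₂ ^ 2 / (2 * d)) * |x - α| ^ 3 := hnum2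
    _ = (B₃ + B₂ ^ 2 / (2 * d)) / d * |x - α| ^ 3 * d := by
        field_simp
    _ ≤ ((B₃ + B₂ ^ 2 / (2 * d)) / d + 1) * |x - α| ^ 3 * d := by
        have : (0:ℝ) ≤ |x - α| ^ 3 * d := by positivity
        nlinarith [this]
    _ ≤ ((B₃ + B₂ ^ 2 / (2 * d)) / d + 1) * |x - α| ^ 3 * |f₁ mx| := by
        refine mul_le_mul_of_nonneg_left hmx1 ?_
        positivity
end

section
/- Let f : ℝ → ℝ be four times continuously differentiable on an open interval containing α with f(α) = 0 and f'(α) ≠ 0. Define y(x) = x - f(x)/f'(x) and the trapezoidal-Newton iterate T(x) = x - 2 f(x)/(f'(x) + f'(y(x))). Then there exist a neighborhood U of α and C > 0 such that for all x ∈ U where the iterate is defined, |T(x) - α| ≤ C·|x - α|³. -/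
open Metric Set Filter

/-- MVT step: if `h α = 0` and `|h'| ≤ K * |t-α|^k` on a closed ball, then
`|h| ≤ K * |x-α|^(k+1)` there. -/
lemma tnc_step {h h' : ℝ → ℝ} {α K r : ℝ} {k : ℕ} (hK : 0 ≤ K)
    (hd : ∀ t ∈ closedBall α r, HasDerivAt h (h' t) t)
    (hb : ∀ t ∈ closedBall α r, |h' t| ≤ K * |t - α| ^ k)
    (h0 : h α = 0) :
    ∀ x ∈ closedBall α r, |h x| ≤ K * |x - α| ^ (k + 1) := by
  intro x hx
  have hr : 0 ≤ r := by
    by_contra hcon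
    rw [Metric.closedBall_eq_empty.mpr (by linarith : r < 0)] at hx
    exact hx
  have hαmem : α ∈ closedBall α r := mem_closedBall_self hr
  have hconv : Convex ℝ (uIcc α x) := by
    rw [← segment_eq_uIcc]; exact convex_segment _ _
  have hsub : uIcc α x ⊆ closedBall α r := by
    rw [← segment_eq_uIcc]
    exact (convex_closedBall α r).segment_subset hαmem hx
  have key := hconv.norm_image_sub_le_of_norm_hasDerivWithin_le
    (f := h) (f' := h')
    (fun t ht => (hd t (hsub ht)).hasDerivWithinAt)
    (fun t ht => by
      have habs : |t - α| ≤ |x - α| := by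
        rcases Set.mem_uIcc.mp ht with ⟨h1, h2⟩ | ⟨h1, h2⟩ <;>
          rw [abs_le] <;> constructor <;>
          linarith [le_abs_self (x - α), neg_abs_le (x - α), abs_nonneg (x - α)]
      calc ‖h' t‖ = |h' t| := rfl
        _ ≤ K * |t - α| ^ k := hb t (hsub ht)
        _ ≤ K * |x - α| ^ k := by gcongr
      )
    left_mem_uIcc right_mem_uIcc
  rw [h0, sub_zero] at key
  calc |h x| = ‖h x‖ := rfl
    _ ≤ K * |x - α| ^ k * ‖x - α‖ := key
    _ = K * |x - α| ^ (k + 1) := by rw [pow_succ]; push_cast [Real.norm_eq_abs]; ring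

theorem trapezoidal_newton_cubic_convergence
    (f : ℝ → ℝ) (α : ℝ) (s : Set ℝ) (hs : IsOpen s) (hαs : α ∈ s)
    (hf : ContDiffOn ℝ 4 f s) (hroot : f α = 0) (hder : deriv f α ≠ 0) :
    ∃ U ∈ nhds α, ∃ C > (0:ℝ), ∀ x ∈ U,
      deriv f x ≠ 0 →
      deriv f x + deriv f (x - f x / deriv f x) ≠ 0 →
      |(x - 2 * f x / (deriv f x + deriv f (x - f x / deriv f x))) - α| ≤ C * |x - α| ^ 3 := by
  set g := deriv f with hgdef
  set c := |g α| with hcdef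
  have hc : 0 < c := abs_pos.mpr hder
  -- smoothness of successive derivatives
  have hg3 : ContDiffOn ℝ 3 g s := hf.deriv_of_isOpen hs (by norm_num)
  have hg12 : ContDiffOn ℝ 2 (deriv g) s := hg3.deriv_of_isOpen hs (by norm_num)
  have hg21 : ContDiffOn ℝ 1 (deriv (deriv g)) s := hg12.deriv_of_isOpen hs (by norm_num)
  -- pointwise derivative facts on s
  have hfd : ∀ x ∈ s, HasDerivAt f (g x) x := fun x hx =>
    ((hf.differentiableOn (by norm_num)).differentiableAt (hs.mem_nhds hx)).hasDerivAt
  have hgder : ∀ x ∈ s, HasDerivAt g (deriv g x) x := fun x hx =>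
    ((hg3.differentiableOn (by norm_num)).differentiableAt (hs.mem_nhds hx)).hasDerivAt
  have hg1der : ∀ x ∈ s, HasDerivAt (deriv g) (deriv (deriv g) x) x := fun x hx =>
    ((hg12.differentiableOn (by norm_num)).differentiableAt (hs.mem_nhds hx)).hasDerivAt
  set y : ℝ → ℝ := fun t => t - f t / g t with hydef
  have hyα : y α = α := by simp [hydef, hroot]
  -- continuity at α
  have hgcont : ContinuousAt g α := hg3.continuousOn.continuousAt (hs.mem_nhds hαs)
  have hfcont : ContinuousAt f α := hf.continuousOn.continuousAt (hs.mem_nhds hαs)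
  have hycont : ContinuousAt y α := continuousAt_id.sub (hfcont.div hgcont hder)
  -- the open set where g is large
  have hV : IsOpen {x ∈ s | c / 2 < |g x|} := by
    have := hg3.continuousOn.abs.isOpen_inter_preimage (t := Ioi (c/2)) hs isOpen_Ioi
    exact this
  have hαV : α ∈ {x ∈ s | c / 2 < |g x|} := ⟨hαs, by simpa using by linarith⟩
  -- eventual properties near α
  have ev1 : ∀ᶠ x in nhds α, x ∈ s ∧ c / 2 < |g x| := hV.mem_nhds hαV
  have ev2 : ∀ᶠ x in nhds α, y x ∈ s ∧ c / 2 < |g (y x)| := by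
    have := hycont.eventually_mem (hV.mem_nhds (by rwa [hyα]))
    exact this
  have hDcont : ContinuousAt (fun x => g x + g (y x)) α := by
    have h1 : ContinuousAt g (y α) := by rwa [hyα]
    exact hgcont.add (h1.comp hycont)
  have ev3 : ∀ᶠ x in nhds α, c < |g x + g (y x)| := by
    have h2c : c < |g α + g (y α)| := by
      rw [hyα]
      have : |g α + g α| = 2 * |g α| := by rw [← two_mul, abs_mul]; simp
      rw [this]; linarith
    exact hDcont.abs.tendsto.eventually_const_lt h2c
  -- extract a radius
  obtain ⟨r, hr0, hrE⟩ := Metric.eventually_nhds_iff.mp ((ev1.and ev2).and ev3)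
  set I : Set ℝ := ball α r with hIdef
  have hIfact : ∀ x ∈ I, ((x ∈ s ∧ c / 2 < |g x|) ∧ y x ∈ s ∧ c / 2 < |g (y x)|) ∧ c < |g x + g (y x)| :=
    fun x hx => hrE (mem_ball.mp hx)
  have hIs : I ⊆ s := fun x hx => (hIfact x hx).1.1.1
  have hIg : ∀ x ∈ I, g x ≠ 0 := fun x hx => by
    have := (hIfact x hx).1.1.2; intro h0; rw [h0] at this; simp at this; linarith
  have hIys : ∀ x ∈ I, y x ∈ s := fun x hx => (hrE (mem_ball.mp hx)).1.2.1
  -- N and its smoothness on I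
  set N : ℝ → ℝ := fun x => (g x + g (y x)) * (x - α) - 2 * f x with hNdef
  have hIopen : IsOpen I := isOpen_ball
  have hfI : ContDiffOn ℝ 3 f I := (hf.of_le (by norm_num)).mono hIs
  have hgI : ContDiffOn ℝ 3 g I := hg3.mono hIs
  have hyI : ContDiffOn ℝ 3 y I := by
    exact ContDiffOn.sub contDiffOn_id (hfI.div hgI (fun x hx => hIg x hx))
  have hgyI : ContDiffOn ℝ 3 (fun x => g (y x)) I := hg3.comp hyI hIys
  have hNsm : ContDiffOn ℝ 3 N I := by
    refine ContDiffOn.sub (ContDiffOn.mul (hgI.add hgyI) ?_) (contDiffOn_const.mul hfI)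
    exact contDiffOn_id.sub contDiffOn_const
  have hN1sm : ContDiffOn ℝ 2 (deriv N) I := hNsm.deriv_of_isOpen hIopen (by norm_num)
  have hN2sm : ContDiffOn ℝ 1 (deriv (deriv N)) I := hN1sm.deriv_of_isOpen hIopen (by norm_num)
  have hN3cont : ContinuousOn (deriv (deriv (deriv N))) I :=
    hN2sm.continuousOn_deriv_of_isOpen hIopen (by norm_num)
  have hNd : ∀ x ∈ I, HasDerivAt N (deriv N x) x := fun x hx =>
    ((hNsm.differentiableOn (by norm_num)).differentiableAt (hIopen.mem_nhds hx)).hasDerivAt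
  have hN1d : ∀ x ∈ I, HasDerivAt (deriv N) (deriv (deriv N) x) x := fun x hx =>
    ((hN1sm.differentiableOn (by norm_num)).differentiableAt (hIopen.mem_nhds hx)).hasDerivAt
  have hN2d : ∀ x ∈ I, HasDerivAt (deriv (deriv N)) (deriv (deriv (deriv N)) x) x := fun x hx =>
    ((hN2sm.differentiableOn (by norm_num)).differentiableAt (hIopen.mem_nhds hx)).hasDerivAt
  -- values at α
  have hNα : N α = 0 := by simp [hNdef, hroot]
  set Y' : ℝ → ℝ := fun x => 1 - (g x * g x - f x * deriv g x) / g x ^ 2 with hY'def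
  have hyd : ∀ x ∈ I, HasDerivAt y (Y' x) x := fun x hx =>
    (hasDerivAt_id x).sub (((hfd x (hIs hx)).div (hgder x (hIs hx)) (hIg x hx)))
  have hαI : α ∈ I := mem_ball_self hr0
  have hY'α : Y' α = 0 := by
    rw [hY'def]; simp only [hroot]; field_simp; ring
  have hydα : HasDerivAt y 0 α := by rw [← hY'α]; exact hyd α hαI
  have hgyd : ∀ x ∈ I, HasDerivAt (fun t => g (y t)) (deriv g (y x) * Y' x) x := by
    intro x hx
    exact (hgder (y x) (hIys x hx)).comp x (hyd x hx)
  set N' : ℝ → ℝ := fun x =>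
    (deriv g x + deriv g (y x) * Y' x) * (x - α) + (g x + g (y x)) * 1 - 2 * g x with hN'def
  have hNd' : ∀ x ∈ I, HasDerivAt N (N' x) x := by
    intro x hx
    have hsum : HasDerivAt (fun t => g t + g (y t)) (deriv g x + deriv g (y x) * Y' x) x :=
      (hgder x (hIs hx)).add (hgyd x hx)
    have hlin : HasDerivAt (fun t : ℝ => t - α) 1 x := by
      simpa using (hasDerivAt_id x).sub_const α
    have h2f : HasDerivAt (fun t => 2 * f t) (2 * g x) x := (hfd x (hIs hx)).const_mul 2
    exact (hsum.mul hlin).sub h2f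
  have hderivN_eq : ∀ x ∈ I, deriv N x = N' x := fun x hx => (hNd' x hx).deriv
  have hN1α : deriv N α = 0 := by
    rw [hderivN_eq α hαI, hN'def]
    simp only [hyα, hY'α]
    ring
  -- second derivative of N vanishes at α
  have hg1yA : HasDerivAt (fun t => deriv g (y t)) (deriv (deriv g) α * 0) α := by
    have h1 : HasDerivAt (deriv g) (deriv (deriv g) α) (y α) := by rw [hyα]; exact hg1der α hαs
    exact h1.comp α hydα
  have hnum : HasDerivAt (fun x => g x * g x - f x * deriv g x)
      (deriv g α * g α + g α * deriv g α - (g α * deriv g α + f α * deriv (deriv g) α)) α :=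
    ((hgder α hαs).mul (hgder α hαs)).sub ((hfd α hαs).mul (hg1der α hαs))
  have hden : HasDerivAt (fun x => g x ^ 2) ((2 : ℕ) * g α ^ (2 - 1) * deriv g α) α :=
    (hgder α hαs).pow 2
  have hY'dA := (hnum.div hden (pow_ne_zero 2 hder)).const_sub 1
  have hA := (hg1der α hαs).add (hg1yA.mul hY'dA)
  have hlinα : HasDerivAt (fun t : ℝ => t - α) 1 α := by
    simpa using (hasDerivAt_id α).sub_const α
  have hB1 := ((hgder α hαs).add (hgyd α hαI)).mul_const (1 : ℝ)
  have h2g := (hgder α hαs).const_mul (2 : ℝ)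
  have hN'd : HasDerivAt N' _ α := ((hA.mul hlinα).add hB1).sub h2g
  have hN2α : deriv (deriv N) α = 0 := by
    have heq : deriv N =ᶠ[nhds α] N' :=
      Filter.eventuallyEq_of_mem (hIopen.mem_nhds hαI) hderivN_eq
    rw [heq.deriv_eq, hN'd.deriv]
    simp only [Pi.add_apply, Pi.mul_apply, Pi.div_apply, hyα, hY'α, hroot]
    field_simp
    ring
  -- bound the third derivative on a compact sub-ball
  set ρ : ℝ := r / 2 with hρdef
  have hρ0 : 0 < ρ := by positivity
  have hBI : closedBall α ρ ⊆ I := by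
    rw [hIdef]
    exact closedBall_subset_ball (by linarith)
  obtain ⟨M0, hM0⟩ := (isCompact_closedBall α ρ).exists_bound_of_continuousOn
    (hN3cont.mono hBI)
  set M : ℝ := max M0 0 with hMdef
  have hM : 0 ≤ M := le_max_right _ _
  -- three MVT steps
  have s3 : ∀ x ∈ closedBall α ρ, |deriv (deriv N) x| ≤ M * |x - α| ^ (0 + 1) := by
    refine tnc_step hM (fun t ht => hN2d t (hBI ht)) (fun t ht => ?_) hN2α
    rw [pow_zero, mul_one]
    exact (hM0 t ht).trans (le_max_left _ _)
  have s2 : ∀ x ∈ closedBall α ρ, |deriv N x| ≤ M * |x - α| ^ (1 + 1) :=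
    tnc_step hM (fun t ht => hN1d t (hBI ht)) (fun t ht => s3 t ht) hN1α
  have s1 : ∀ x ∈ closedBall α ρ, |N x| ≤ M * |x - α| ^ (2 + 1) :=
    tnc_step hM (fun t ht => hNd t (hBI ht)) (fun t ht => s2 t ht) hNα
  -- conclusion
  refine ⟨ball α ρ, ball_mem_nhds α hρ0, (M + 1) / c, div_pos (by linarith) hc, ?_⟩
  intro x hxU _ _
  have hxB : x ∈ closedBall α ρ := ball_subset_closedBall hxU
  have hxI : x ∈ I := hBI hxB
  have hcD : c < |g x + g (y x)| := (hIfact x hxI).2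
  have hDpos : (0:ℝ) < |g x + g (y x)| := lt_trans hc hcD
  have hDne : g x + g (y x) ≠ 0 := abs_pos.mp hDpos
  have hNx : N x = (g x + g (y x)) * (x - α) - 2 * f x := rfl
  have hTeq : x - 2 * f x / (g x + g (y x)) - α = N x / (g x + g (y x)) := by
    rw [hNx]
    field_simp
    ring
  have hNb : |N x| ≤ M * |x - α| ^ 3 := s1 x hxB
  have hq : (0:ℝ) ≤ |x - α| ^ 3 := by positivity
  calc |x - 2 * f x / (g x + g (y x)) - α|
      = |N x| / |g x + g (y x)| := by rw [hTeq, abs_div]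
    _ ≤ (M + 1) * |x - α| ^ 3 / c := by
        apply div_le_div₀ (by positivity) ?_ hc (le_of_lt hcD)
        nlinarith
    _ = (M + 1) / c * |x - α| ^ 3 := by ring
end

section
/- Let f : ℝ → ℝ be four times continuously differentiable on an open interval containing α with f(α) = 0 and f'(α) ≠ 0. Define y(x) = x - f(x)/f'(x) and the Midpoint-Trapezoidal Newton iterate S(x) = x - 4 f(x) / (f'(x) + 2 f'((x + y(x))/2) + f'(y(x))). Then there exist a neighborhood U of α and C > 0 such that for all x ∈ U where the iterate is defined, |S(x) - α| ≤ C·|x - α|³. -/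
private lemma seg_bound {g g' : ℝ → ℝ} {u v C : ℝ}
    (hd : ∀ t ∈ segment ℝ u v, HasDerivAt g (g' t) t)
    (hC : ∀ t ∈ segment ℝ u v, |g' t| ≤ C) :
    |g v - g u| ≤ C * |v - u| := by
  have := Convex.norm_image_sub_le_of_norm_hasDerivWithin_le
    (fun t ht => (hd t ht).hasDerivWithinAt)
    (fun t ht => by simpa [Real.norm_eq_abs] using hC t ht)
    (convex_segment u v) (left_mem_segment ℝ u v) (right_mem_segment ℝ u v)
  simpa [Real.norm_eq_abs] using this

set_option maxHeartbeats 1000000 in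
theorem midpoint_trapezoidal_newton_cubic_convergence
    (f : ℝ → ℝ) (α : ℝ) (s : Set ℝ) (hs : IsOpen s) (hαs : α ∈ s)
    (hf : ContDiffOn ℝ 4 f s) (hroot : f α = 0) (hder : deriv f α ≠ 0) :
    ∃ U ∈ nhds α, ∃ C > (0:ℝ), ∀ x ∈ U,
      deriv f x ≠ 0 →
      deriv f x + 2 * deriv f ((x + (x - f x / deriv f x)) / 2)
        + deriv f (x - f x / deriv f x) ≠ 0 →
      |(x - 4 * f x / (deriv f x + 2 * deriv f ((x + (x - f x / deriv f x)) / 2)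
        + deriv f (x - f x / deriv f x))) - α| ≤ C * |x - α| ^ 3 := by
  set f1 := deriv f with hf1def
  set f2 := deriv f1 with hf2def
  have hC3 : ContDiffOn ℝ 3 f1 s := hf.deriv_of_isOpen hs (by norm_num)
  have hC2 : ContDiffOn ℝ 2 f2 s := hC3.deriv_of_isOpen hs (by norm_num)
  have hf3c : ContinuousOn (deriv f2) s := hC2.continuousOn_deriv_of_isOpen hs (by norm_num)
  have hf2c : ContinuousOn f2 s := hC2.continuousOn
  have hd1 : ∀ t ∈ s, HasDerivAt f (f1 t) t := fun t ht =>
    ((hf.differentiableOn (by norm_num)).differentiableAt (hs.mem_nhds ht)).hasDerivAt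
  have hd2 : ∀ t ∈ s, HasDerivAt f1 (f2 t) t := fun t ht =>
    ((hC3.differentiableOn (by norm_num)).differentiableAt (hs.mem_nhds ht)).hasDerivAt
  have hd3 : ∀ t ∈ s, HasDerivAt f2 (deriv f2 t) t := fun t ht =>
    ((hC2.differentiableOn (by norm_num)).differentiableAt (hs.mem_nhds ht)).hasDerivAt
  obtain ⟨δ0, hδ0pos, hball⟩ := Metric.isOpen_iff.1 hs α hαs
  set K : Set ℝ := Metric.closedBall α (δ0/2) with hKdef
  have hKs : K ⊆ s := by
    intro t ht
    exact hball (lt_of_le_of_lt (Metric.mem_closedBall.1 ht) (by linarith))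
  have hKconv : Convex ℝ K := convex_closedBall _ _
  have hαK : α ∈ K := Metric.mem_closedBall_self (by linarith)
  obtain ⟨M0, hM0⟩ := (isCompact_closedBall α (δ0/2)).exists_bound_of_continuousOn
    (hf2c.mono hKs)
  obtain ⟨B0, hB0⟩ := (isCompact_closedBall α (δ0/2)).exists_bound_of_continuousOn
    (hf3c.mono hKs)
  set M := max M0 1 with hMdef
  set B := max B0 1 with hBdef
  have hMpos : (0:ℝ) < M := lt_of_lt_of_le one_pos (le_max_right _ _)
  have hBpos : (0:ℝ) < B := lt_of_lt_of_le one_pos (le_max_right _ _)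
  have hM : ∀ t ∈ K, |f2 t| ≤ M := fun t ht =>
    le_trans (by simpa [Real.norm_eq_abs] using hM0 t ht) (le_max_left _ _)
  have hB : ∀ t ∈ K, |deriv f2 t| ≤ B := fun t ht =>
    le_trans (by simpa [Real.norm_eq_abs] using hB0 t ht) (le_max_left _ _)
  set a := |f1 α| with hadef
  have hapos : 0 < a := abs_pos.2 hder
  set δ := min (δ0/2) (a / (2*M)) with hδdef
  have hδpos : 0 < δ := lt_min (by linarith) (by positivity)
  have hδK : Metric.closedBall α δ ⊆ K :=
    Metric.closedBall_subset_closedBall (min_le_left _ _)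
  have hMδ : M * δ ≤ a/2 := by
    have h1 : δ ≤ a/(2*M) := min_le_right _ _
    calc M * δ ≤ M * (a/(2*M)) := by nlinarith
    _ = a/2 := by field_simp
  -- f1 is M-Lipschitz on K
  have hLip1 : ∀ u ∈ K, ∀ v ∈ K, |f1 v - f1 u| ≤ M * |v - u| := by
    intro u hu v hv
    exact seg_bound (fun t ht => hd2 t (hKs (hKconv.segment_subset hu hv ht)))
      (fun t ht => hM t (hKconv.segment_subset hu hv ht))
  -- second-order bound on f1 (Taylor remainder at α)
  have hA : ∀ w ∈ K, |f1 w - f1 α - f2 α * (w - α)| ≤ B * (w-α)^2 := by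
    intro w hw
    have hseg : segment ℝ α w ⊆ K := hKconv.segment_subset hαK hw
    have hd : ∀ t ∈ segment ℝ α w,
        HasDerivAt (fun t => f1 t - f2 α * t) (f2 t - f2 α) t := by
      intro t ht
      exact (hd2 t (hKs (hseg ht))).sub (by simpa using (hasDerivAt_id t).const_mul (f2 α))
    have hc : ∀ t ∈ segment ℝ α w, |f2 t - f2 α| ≤ B * |w - α| := by
      intro t ht
      have h1 : |f2 t - f2 α| ≤ B * |t - α| := by
        have := seg_bound (g := f2) (g' := deriv f2)
          (fun r hr => hd3 r (hKs (hKconv.segment_subset hαK (hseg ht) hr)))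
          (fun r hr => hB r (hKconv.segment_subset hαK (hseg ht) hr))
        simpa using this
      have h2 : |t - α| ≤ |w - α| := by
        rw [segment_eq_uIcc] at ht
        exact Set.abs_sub_left_of_mem_uIcc ht
      nlinarith [abs_nonneg (t - α)]
    have := seg_bound hd hc
    have habs : |w - α| * |w - α| = (w - α)^2 := by
      rw [← abs_mul, abs_mul_self, sq]
    calc |f1 w - f1 α - f2 α * (w - α)|
        = |(f1 w - f2 α * w) - (f1 α - f2 α * α)| := by ring_nf
      _ ≤ B * |w - α| * |w - α| := this
      _ = B * (w - α)^2 := by rw [mul_assoc, habs]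
  -- third-order bound on f (Taylor remainder at α), using f α = 0
  have hTay : ∀ w ∈ K, |f w - f1 α * (w-α) - f2 α * (w-α)^2/2| ≤ B * |w-α|^3 := by
    intro w hw
    have hseg : segment ℝ α w ⊆ K := hKconv.segment_subset hαK hw
    have hd : ∀ t ∈ segment ℝ α w,
        HasDerivAt (fun t => f t - f1 α * t - f2 α * (t-α)^2/2)
          (f1 t - f1 α - f2 α * (t - α)) t := by
      intro t ht
      have h1 : HasDerivAt (fun t : ℝ => f2 α * (t-α)^2/2) (f2 α * (t - α)) t := by
        have : HasDerivAt (fun t : ℝ => (t-α)^2) (2*(t-α)) t := by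
          simpa using (((hasDerivAt_id t).sub_const α).fun_pow 2)
        have := (this.const_mul (f2 α)).div_const 2
        exact this.congr_deriv (by ring)
      have := ((hd1 t (hKs (hseg ht))).fun_sub
        (by simpa using (hasDerivAt_id t).const_mul (f1 α))).fun_sub h1
      convert this using 1
      all_goals ring
    have hc : ∀ t ∈ segment ℝ α w,
        |f1 t - f1 α - f2 α * (t - α)| ≤ B * (w - α)^2 := by
      intro t ht
      have h1 := hA t (hseg ht)
      have h2 : |t - α| ≤ |w - α| := by
        rw [segment_eq_uIcc] at ht
        exact Set.abs_sub_left_of_mem_uIcc ht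
      have h3 := mul_self_le_mul_self (abs_nonneg (t-α)) h2
      have : (t-α)^2 ≤ (w-α)^2 := by nlinarith [sq_abs (t-α), sq_abs (w-α)]
      nlinarith
    have := seg_bound hd hc
    have h3 : B * (w - α)^2 * |w - α| = B * |w - α|^3 := by
      rw [← sq_abs (w-α)]; ring
    calc |f w - f1 α * (w-α) - f2 α * (w-α)^2/2|
        = |(f w - f1 α * w - f2 α * (w-α)^2/2) - (f α - f1 α * α - f2 α * (α-α)^2/2)| := by
          rw [hroot]; ring_nf
      _ ≤ B * (w - α)^2 * |w - α| := this
      _ = B * |w - α|^3 := h3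
  -- the constant
  refine ⟨Metric.ball α δ, Metric.ball_mem_nhds α hδpos,
    (11/2*B + 4*M^2/a)/(2*a) + 1, by positivity, ?_⟩
  intro x hx _ _
  set e := x - α with hedef
  have he : |e| ≤ δ := le_of_lt (by simpa [Real.dist_eq] using Metric.mem_ball.1 hx)
  have hxK : x ∈ K := hδK (by simpa [Real.dist_eq, hedef] using he)
  have hxs : x ∈ s := hKs hxK
  have hMe : M * |e| ≤ a/2 := le_trans (by nlinarith) hMδ
  have hf1x : a/2 ≤ |f1 x| := by
    have := hLip1 α hαK x hxK
    have habs := abs_sub_abs_le_abs_sub (f1 x) (f1 α)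
    have h6 : |f1 x - f1 α| ≤ a/2 := le_trans this (by simpa [hedef] using hMe)
    have h5 := abs_sub_abs_le_abs_sub (f1 α) (f1 x)
    rw [abs_sub_comm, ← hadef] at h5
    linarith
  have hf1xne : f1 x ≠ 0 := by
    intro h; rw [h] at hf1x; simp at hf1x; linarith
  set y := x - f x / f1 x with hydef
  -- Newton step bound
  have hNe : |e * f1 x - f x| ≤ M * e^2 := by
    have hd : ∀ t ∈ segment ℝ x α, HasDerivAt (fun t => f t - f1 x * t) (f1 t - f1 x) t := by
      intro t ht
      exact (hd1 t (hKs (hKconv.segment_subset hxK hαK ht))).sub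
        (by simpa using (hasDerivAt_id t).const_mul (f1 x))
    have hc : ∀ t ∈ segment ℝ x α, |f1 t - f1 x| ≤ M * |e| := by
      intro t ht
      have h1 := hLip1 x hxK t (hKconv.segment_subset hxK hαK ht)
      have h2 : |t - x| ≤ |α - x| := by
        rw [segment_eq_uIcc] at ht
        exact Set.abs_sub_left_of_mem_uIcc ht
      have h3 : |α - x| = |e| := by rw [hedef, abs_sub_comm]
      nlinarith [abs_nonneg (t-x)]
    have := seg_bound hd hc
    have heq : (f α - f1 x * α) - (f x - f1 x * x) = e * f1 x - f x := by
      rw [hroot, hedef]; ring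
    have h4 : |α - x| = |e| := by rw [hedef, abs_sub_comm]
    calc |e * f1 x - f x| = |(f α - f1 x * α) - (f x - f1 x * x)| := by rw [heq]
      _ ≤ M * |e| * |α - x| := this
      _ = M * e^2 := by rw [h4, mul_assoc, abs_mul_abs_self]; ring
  have hyα : |y - α| ≤ 2*M/a * e^2 := by
    have heq : y - α = (e * f1 x - f x)/f1 x := by
      rw [hydef, hedef]; field_simp; ring
    rw [heq, abs_div]
    rw [div_le_iff₀ (lt_of_lt_of_le (by linarith) hf1x)]
    calc |e * f1 x - f x| ≤ M * e^2 := hNe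
      _ ≤ 2*M/a * e^2 * (a/2) := le_of_eq (by field_simp)
      _ ≤ 2*M/a * e^2 * |f1 x| := by
          have : (0:ℝ) ≤ 2*M/a * e^2 := by positivity
          nlinarith
  have hye : |y - α| ≤ |e| := by
    have h1 : 2*M/a * e^2 ≤ |e| := by
      have he2 : e^2 = |e| * |e| := by rw [abs_mul_abs_self, sq]
      rw [he2]
      have : 2*M/a * |e| ≤ 1 := by
        rw [div_mul_eq_mul_div, div_le_one hapos]
        nlinarith
      nlinarith [abs_nonneg e]
    linarith [hyα]
  have hyK : y ∈ K := hδK (by simp [Real.dist_eq]; linarith [hye, he])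
  set m := (x + y)/2 with hmdef
  have hmα : |m - α| ≤ |e| := by
    have heq : m - α = (e + (y - α))/2 := by rw [hmdef, hedef]; ring
    rw [heq]
    calc |(e + (y-α))/2| = |e + (y-α)|/2 := by rw [abs_div, abs_two]
      _ ≤ (|e| + |y - α|)/2 := by linarith [abs_add_le e (y-α)]
      _ ≤ |e| := by linarith
  have hmK : m ∈ K := hδK (by simp [Real.dist_eq]; linarith [hmα, he])
  set c := α + e/2 with hcdef
  have hcK : c ∈ K := by
    apply hδK
    rw [Metric.mem_closedBall, Real.dist_eq]
    have h1 : α + e/2 - α = e/2 := by ring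
    rw [hcdef, h1, abs_div, abs_two]
    linarith
  have hmc : |m - c| = |y - α|/2 := by
    have : m - c = (y - α)/2 := by rw [hmdef, hcdef, hedef]; ring
    rw [this, abs_div]; norm_num
  set D := f1 x + 2 * f1 m + f1 y with hDdef
  have hDlb : 2*a ≤ |D| := by
    have h1 : |f1 x - f1 α| ≤ a/2 := le_trans (hLip1 α hαK x hxK) (by simpa [hedef] using hMe)
    have h2 : |f1 m - f1 α| ≤ a/2 := by
      have := hLip1 α hαK m hmK
      have : |f1 m - f1 α| ≤ M * |e| := le_trans this (by nlinarith [hmα, hMpos])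
      linarith [hMe]
    have h3 : |f1 y - f1 α| ≤ a/2 := by
      have := hLip1 α hαK y hyK
      have : |f1 y - f1 α| ≤ M * |e| := le_trans this (by nlinarith [hye, hMpos])
      linarith [hMe]
    have h4 : |D - 4 * f1 α| ≤ 2*a := by
      calc |D - 4 * f1 α| = |(f1 x - f1 α) + 2*(f1 m - f1 α) + (f1 y - f1 α)| := by
            rw [hDdef]; ring_nf
        _ ≤ |f1 x - f1 α| + 2*|f1 m - f1 α| + |f1 y - f1 α| := by
            calc |(f1 x - f1 α) + 2*(f1 m - f1 α) + (f1 y - f1 α)|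
                ≤ |(f1 x - f1 α) + 2*(f1 m - f1 α)| + |f1 y - f1 α| := abs_add_le _ _
              _ ≤ |f1 x - f1 α| + |2*(f1 m - f1 α)| + |f1 y - f1 α| := by
                  linarith [abs_add_le (f1 x - f1 α) (2*(f1 m - f1 α))]
              _ = |f1 x - f1 α| + 2*|f1 m - f1 α| + |f1 y - f1 α| := by
                  rw [abs_mul]; norm_num
        _ ≤ 2*a := by linarith
    have h5 : |4 * f1 α| = 4 * a := by rw [abs_mul]; norm_num [hadef]
    have := abs_sub_abs_le_abs_sub (4 * f1 α) D
    rw [h5] at this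
    have h6 : |4 * f1 α - D| = |D - 4 * f1 α| := abs_sub_comm _ _
    linarith [h6 ▸ this]
  have hDne : D ≠ 0 := by
    intro h; rw [h] at hDlb; simp at hDlb; linarith
  -- the five remainder terms
  have hA1 : |f1 x - f1 α - f2 α * e| ≤ B * e^2 := by simpa [hedef] using hA x hxK
  have hA2 : |f1 c - f1 α - f2 α * (e/2)| ≤ B * e^2/4 := by
    have := hA c hcK
    have hce : c - α = e/2 := by rw [hcdef]; ring
    rw [hce] at this
    calc |f1 c - f1 α - f2 α * (e/2)| ≤ B * (e/2)^2 := this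
      _ = B * e^2/4 := by ring
  have hA3 : |f x - f1 α * e - f2 α * e^2/2| ≤ B * |e|^3 := by
    simpa [hedef] using hTay x hxK
  have hA4 : |f1 m - f1 c| ≤ M^2/a * e^2 := by
    have := hLip1 c hcK m hmK
    rw [hmc] at this
    calc |f1 m - f1 c| ≤ M * (|y-α|/2) := this
      _ ≤ M * (2*M/a * e^2 / 2) := by nlinarith [hyα, hMpos]
      _ = M^2/a * e^2 := by ring
  have hA5 : |f1 y - f1 α| ≤ 2*M^2/a * e^2 := by
    have := hLip1 α hαK y hyK
    calc |f1 y - f1 α| ≤ M * |y - α| := this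
      _ ≤ M * (2*M/a * e^2) := by nlinarith [hyα, hMpos]
      _ = 2*M^2/a * e^2 := by ring
  -- algebraic identity for the numerator
  have hNid : e * D - 4 * f x =
      e * (f1 x - f1 α - f2 α * e) + 2*e*(f1 c - f1 α - f2 α * (e/2))
      + 2*e*(f1 m - f1 c) + e*(f1 y - f1 α) - 4*(f x - f1 α * e - f2 α * e^2/2) := by
    rw [hDdef]; ring
  have he3 : |e| * e^2 = |e|^3 := by rw [← sq_abs e]; ring
  have hNb : |e * D - 4 * f x| ≤ (11/2*B + 4*M^2/a) * |e|^3 := by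
    rw [hNid]
    have t1 : |e * (f1 x - f1 α - f2 α * e)| ≤ B * |e|^3 := by
      rw [abs_mul]
      calc |e| * |f1 x - f1 α - f2 α * e| ≤ |e| * (B * e^2) := by
            exact mul_le_mul_of_nonneg_left hA1 (abs_nonneg e)
        _ = B * (|e| * e^2) := by ring
        _ = B * |e|^3 := by rw [he3]
    have t2 : |2*e*(f1 c - f1 α - f2 α * (e/2))| ≤ B/2 * |e|^3 := by
      rw [abs_mul, abs_mul]
      have : |(2:ℝ)| = 2 := by norm_num
      rw [this]
      calc 2 * |e| * |f1 c - f1 α - f2 α * (e/2)| ≤ 2 * |e| * (B * e^2/4) := by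
            exact mul_le_mul_of_nonneg_left hA2 (by positivity)
        _ = B/2 * (|e| * e^2) := by ring
        _ = B/2 * |e|^3 := by rw [he3]
    have t4 : |2*e*(f1 m - f1 c)| ≤ 2*M^2/a * |e|^3 := by
      rw [abs_mul, abs_mul]
      have h2 : |(2:ℝ)| = 2 := by norm_num
      rw [h2]
      calc 2 * |e| * |f1 m - f1 c| ≤ 2 * |e| * (M^2/a * e^2) := by
            exact mul_le_mul_of_nonneg_left hA4 (by positivity)
        _ = 2*M^2/a * (|e| * e^2) := by ring
        _ = 2*M^2/a * |e|^3 := by rw [he3]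
    have t5 : |e*(f1 y - f1 α)| ≤ 2*M^2/a * |e|^3 := by
      rw [abs_mul]
      calc |e| * |f1 y - f1 α| ≤ |e| * (2*M^2/a * e^2) := by
            exact mul_le_mul_of_nonneg_left hA5 (abs_nonneg e)
        _ = 2*M^2/a * (|e| * e^2) := by ring
        _ = 2*M^2/a * |e|^3 := by rw [he3]
    have t3 : |4*(f x - f1 α * e - f2 α * e^2/2)| ≤ 4*B * |e|^3 := by
      rw [abs_mul]
      have h4 : |(4:ℝ)| = 4 := by norm_num
      rw [h4]; linarith [hA3]
    calc |e * (f1 x - f1 α - f2 α * e) + 2*e*(f1 c - f1 α - f2 α * (e/2))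
          + 2*e*(f1 m - f1 c) + e*(f1 y - f1 α) - 4*(f x - f1 α * e - f2 α * e^2/2)|
        ≤ |e * (f1 x - f1 α - f2 α * e) + 2*e*(f1 c - f1 α - f2 α * (e/2))
          + 2*e*(f1 m - f1 c) + e*(f1 y - f1 α)| + |4*(f x - f1 α * e - f2 α * e^2/2)| :=
          abs_sub _ _
      _ ≤ |e * (f1 x - f1 α - f2 α * e) + 2*e*(f1 c - f1 α - f2 α * (e/2))
          + 2*e*(f1 m - f1 c)| + |e*(f1 y - f1 α)| + |4*(f x - f1 α * e - f2 α * e^2/2)| := by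
          linarith [abs_add_le (e * (f1 x - f1 α - f2 α * e) + 2*e*(f1 c - f1 α - f2 α * (e/2))
            + 2*e*(f1 m - f1 c)) (e*(f1 y - f1 α))]
      _ ≤ |e * (f1 x - f1 α - f2 α * e) + 2*e*(f1 c - f1 α - f2 α * (e/2))|
          + |2*e*(f1 m - f1 c)| + |e*(f1 y - f1 α)| + |4*(f x - f1 α * e - f2 α * e^2/2)| := by
          linarith [abs_add_le (e * (f1 x - f1 α - f2 α * e) + 2*e*(f1 c - f1 α - f2 α * (e/2)))
            (2*e*(f1 m - f1 c))]
      _ ≤ |e * (f1 x - f1 α - f2 α * e)| + |2*e*(f1 c - f1 α - f2 α * (e/2))|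
          + |2*e*(f1 m - f1 c)| + |e*(f1 y - f1 α)| + |4*(f x - f1 α * e - f2 α * e^2/2)| := by
          linarith [abs_add_le (e * (f1 x - f1 α - f2 α * e)) (2*e*(f1 c - f1 α - f2 α * (e/2)))]
      _ ≤ B * |e|^3 + B/2 * |e|^3 + (2*M^2/a*|e|^3 + (2*M^2/a*|e|^3 + 4*B*|e|^3)) := by
          linarith [t1, t2, t3, t4, t5]
      _ = (11/2*B + 4*M^2/a) * |e|^3 := by ring
  -- conclude
  have hfinal : x - 4 * f x / D - α = (e * D - 4 * f x)/D := by
    rw [hedef]; field_simp; ring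
  rw [hfinal, abs_div]
  have h2a : (0:ℝ) < 2*a := by linarith
  rw [div_le_iff₀ (lt_of_lt_of_le h2a hDlb)]
  have hQ : 11/2*B + 4*M^2/a ≤ ((11/2*B + 4*M^2/a)/(2*a) + 1)*(2*a) := by
    have h1 : ((11/2*B + 4*M^2/a)/(2*a))*(2*a) = 11/2*B + 4*M^2/a :=
      div_mul_cancel₀ _ (ne_of_gt h2a)
    nlinarith
  calc |e * D - 4 * f x| ≤ (11/2*B + 4*M^2/a) * |e|^3 := hNb
    _ ≤ (((11/2*B + 4*M^2/a)/(2*a) + 1)*(2*a)) * |e|^3 :=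
        mul_le_mul_of_nonneg_right hQ (pow_nonneg (abs_nonneg e) 3)
    _ = ((11/2*B + 4*M^2/a)/(2*a) + 1) * |e|^3 * (2*a) := by ring
    _ ≤ ((11/2*B + 4*M^2/a)/(2*a) + 1) * |e|^3 * |D| :=
        mul_le_mul_of_nonneg_left hDlb (by positivity)
end

section
/- Let f : ℝ → ℝ be four times continuously differentiable near a simple root α (f(α)=0, f'(α)≠0). Define y(x) = x - f(x)/f'(x) and the harmonic-mean Newton iterate H(x) = x - (f(x)/2)·(1/f'(x) + 1/f'(y(x))). Then there exist a neighborhood U of α and C > 0 such that for all x ∈ U where the iterate is defined, |H(x) - α| ≤ C·|x - α|³. -/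
open intervalIntegral MeasureTheory in
lemma hn_step {g g' : ℝ → ℝ} {α r K : ℝ} {n : ℕ}
    (hg : ∀ x ∈ Metric.ball α r, HasDerivAt g (g' x) x)
    (hg'c : ContinuousOn g' (Metric.ball α r))
    (hg0 : g α = 0) (hα : α ∈ Metric.ball α r)
    (hb : ∀ x ∈ Metric.ball α r, |g' x| ≤ K * |x - α| ^ n) :
    ∀ x ∈ Metric.ball α r, |g x| ≤ K / (n + 1) * |x - α| ^ (n + 1) := by
  intro x hx
  have hsub : Set.uIcc α x ⊆ Metric.ball α r :=
    (convex_ball α r).ordConnected.uIcc_subset hα hx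
  have hcont : ContinuousOn g' (Set.uIcc α x) := hg'c.mono hsub
  have hint : IntervalIntegrable g' volume α x := hcont.intervalIntegrable
  have hftc : ∫ t in α..x, g' t = g x - g α :=
    integral_eq_sub_of_hasDerivAt (fun t ht => hg t (hsub ht)) hint
  have h1 : |g x| = ‖∫ t in α..x, g' t‖ := by
    rw [hftc, hg0, sub_zero, Real.norm_eq_abs]
  rw [h1]
  calc ‖∫ t in α..x, g' t‖ ≤ ∫ t in Set.uIoc α x, ‖g' t‖ :=
        norm_integral_le_integral_norm_uIoc
    _ ≤ ∫ t in Set.uIoc α x, K * |t - α| ^ n := by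
        apply setIntegral_mono_on hint.norm.def'
          (((continuous_const.mul ((continuous_id.sub continuous_const).abs.pow n)).intervalIntegrable α x).def')
          measurableSet_uIoc
        intro t ht
        rw [Real.norm_eq_abs]
        exact hb t (hsub (Set.uIoc_subset_uIcc ht))
    _ = K * (|x - α| ^ (n + 1) / (n + 1)) := by
        rw [MeasureTheory.integral_const_mul, integral_pow_abs_sub_uIoc]
    _ = K / (n + 1) * |x - α| ^ (n + 1) := by ring

theorem harmonic_newton_cubic_convergence
    (f : ℝ → ℝ) (α : ℝ) (s : Set ℝ) (hs : IsOpen s) (hαs : α ∈ s)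
    (hf : ContDiffOn ℝ 4 f s) (hroot : f α = 0) (hder : deriv f α ≠ 0) :
    ∃ U ∈ nhds α, ∃ C > (0:ℝ), ∀ x ∈ U,
      deriv f x ≠ 0 →
      deriv f (x - f x / deriv f x) ≠ 0 →
      |(x - (f x / 2) * (1 / deriv f x + 1 / deriv f (x - f x / deriv f x))) - α|
        ≤ C * |x - α| ^ 3 := by
  set D := deriv f with hD_def
  set D2 := deriv D with hD2_def
  have hD : ContDiffOn ℝ 3 D s := hf.deriv_of_isOpen hs (by norm_num)
  have hD2c : ContDiffOn ℝ 2 D2 s := hD.deriv_of_isOpen hs (by norm_num)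
  have hfd : ∀ x ∈ s, HasDerivAt f (D x) x := fun x hx =>
    ((hf.differentiableOn (by norm_num)).differentiableAt (hs.mem_nhds hx)).hasDerivAt
  have hDd : ∀ x ∈ s, HasDerivAt D (D2 x) x := fun x hx =>
    ((hD.differentiableOn (by norm_num)).differentiableAt (hs.mem_nhds hx)).hasDerivAt
  have hD2d : ∀ x ∈ s, HasDerivAt D2 (deriv D2 x) x := fun x hx =>
    ((hD2c.differentiableOn (by norm_num)).differentiableAt (hs.mem_nhds hx)).hasDerivAt
  set y : ℝ → ℝ := fun x => x - f x / D x with hy_def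
  set t0 : Set ℝ := {x ∈ s | D x ≠ 0} with ht0_def
  have ht0o : IsOpen t0 := by
    have h : t0 = s ∩ D ⁻¹' {(0:ℝ)}ᶜ := rfl
    rw [h]
    exact hD.continuousOn.isOpen_inter_preimage hs isOpen_compl_singleton
  have ht0s : t0 ⊆ s := fun z hz => hz.1
  have hyc : ContDiffOn ℝ 3 y t0 := by
    exact contDiffOn_id.sub (ContDiffOn.div ((hf.of_le (by norm_num)).mono ht0s)
      (hD.mono ht0s) (fun z hz => hz.2))
  set t : Set ℝ := {x ∈ t0 | y x ∈ t0} with ht_def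
  have hto : IsOpen t := by
    have h : t = t0 ∩ y ⁻¹' t0 := rfl
    rw [h]
    exact hyc.continuousOn.isOpen_inter_preimage ht0o ht0o
  have hyα : y α = α := by simp [hy_def, hroot]
  have hαt0 : α ∈ t0 := ⟨hαs, hder⟩
  have hαt : α ∈ t := ⟨hαt0, by rw [hyα]; exact hαt0⟩
  have hts : t ⊆ s := fun z hz => hz.1.1
  have hyt : ∀ x ∈ t, y x ∈ t0 := fun x hx => hx.2
  set H : ℝ → ℝ := fun x => x - f x / 2 * (1 / D x + 1 / D (y x)) with hH_def
  have hHc : ContDiffOn ℝ 3 H t := by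
    apply ContDiffOn.sub contDiffOn_id
    apply ContDiffOn.mul (((hf.of_le (by norm_num)).mono hts).div_const 2)
    apply ContDiffOn.add
    · exact ContDiffOn.div contDiffOn_const (hD.mono hts) (fun z hz => hz.1.2)
    · apply ContDiffOn.div contDiffOn_const
      · exact (hD.mono ht0s).comp (hyc.mono (fun z hz => hz.1)) hyt
      · exact fun z hz => (hyt z hz).2
  set φ : ℝ → ℝ := fun x =>
    1 - D x / 2 * (1 / D x + 1 / D (y x))
      - f x / 2 * (-(D2 x) / D x ^ 2 - D2 (y x) * (f x * D2 x / D x ^ 2) / D (y x) ^ 2)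
    with hφ_def
  have key : ∀ x ∈ t, HasDerivAt H (φ x) x := by
    intro x hx
    have hxs : x ∈ s := hts hx
    have hx0 : D x ≠ 0 := hx.1.2
    have hyxs : y x ∈ s := (hyt x hx).1
    have hx1 : D (y x) ≠ 0 := hx.2.2
    have hfx := hfd x hxs
    have hDx := hDd x hxs
    have hDyx := hDd (y x) hyxs
    have hyx : HasDerivAt y (1 - (D x * D x - f x * D2 x) / D x ^ 2) x :=
      (hasDerivAt_id x).sub (hfx.div hDx hx0)
    have hDy : HasDerivAt (fun z => D (y z))
        (D2 (y x) * (1 - (D x * D x - f x * D2 x) / D x ^ 2)) x := by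
      simpa [Function.comp_def] using hDyx.comp x hyx
    have hinv1 := (hasDerivAt_const x (1:ℝ)).div hDx hx0
    have hinv2 := (hasDerivAt_const x (1:ℝ)).div hDy hx1
    have hH' := (hasDerivAt_id x).sub ((hfx.div_const 2).mul (hinv1.add hinv2))
    refine hH'.congr_deriv ?_
    simp only [hφ_def, Pi.add_apply, Pi.sub_apply, Pi.div_apply, Pi.mul_apply, Pi.pow_apply, Pi.neg_apply]
    field_simp
    ring
  have hφα : φ α = 0 := by
    simp only [hφ_def, hroot, hyα]
    field_simp
    ring
  have hH'α : deriv H α = 0 := by rw [(key α hαt).deriv, hφα]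
  have hev : deriv H =ᶠ[nhds α] φ :=
    Filter.eventuallyEq_of_mem (hto.mem_nhds hαt) (fun x hx => (key x hx).deriv)
  have hφ' : HasDerivAt φ 0 α := by
    have hfα := hfd α hαs
    have hDα := hDd α hαs
    have hD2α := hD2d α hαs
    have hDyα : HasDerivAt D (D2 (y α)) (y α) := by rw [hyα]; exact hDd α hαs
    have hD2yα : HasDerivAt D2 (deriv D2 (y α)) (y α) := by rw [hyα]; exact hD2d α hαs
    have hyα' : HasDerivAt y (1 - (D α * D α - f α * D2 α) / D α ^ 2) α :=
      (hasDerivAt_id α).sub (hfα.div hDα hder)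
    have hDy : HasDerivAt (fun z => D (y z))
        (D2 (y α) * (1 - (D α * D α - f α * D2 α) / D α ^ 2)) α := by
      simpa [Function.comp_def] using hDyα.comp α hyα'
    have hD2y : HasDerivAt (fun z => D2 (y z))
        (deriv D2 (y α) * (1 - (D α * D α - f α * D2 α) / D α ^ 2)) α := by
      simpa [Function.comp_def] using hD2yα.comp α hyα'
    have hDyne : D (y α) ≠ 0 := by rw [hyα]; exact hder
    have hinv1 := (hasDerivAt_const α (1:ℝ)).div hDα hder
    have hinv2 := (hasDerivAt_const α (1:ℝ)).div hDy hDyne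
    have hT1 := (hDα.div_const 2).mul (hinv1.add hinv2)
    have hpow := hDα.pow 2
    have hu := (hfα.mul hD2α).div hpow (pow_ne_zero 2 hder)
    have hT2 := (hD2α.neg).div hpow (pow_ne_zero 2 hder)
    have hpowy := hDy.pow 2
    have hT3 := (hD2y.mul hu).div hpowy (pow_ne_zero 2 hDyne)
    have hφ'' := ((hasDerivAt_const α (1:ℝ)).sub hT1).sub ((hfα.div_const 2).mul (hT2.sub hT3))
    refine hφ''.congr_deriv ?_
    simp only [hroot, hyα, Pi.add_apply, Pi.sub_apply, Pi.div_apply, Pi.mul_apply, Pi.pow_apply, Pi.neg_apply]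
    field_simp
    ring
  have hH''α : deriv (deriv H) α = 0 := by
    rw [hev.deriv_eq, hφ'.deriv]
  set h1 := deriv H with hh1_def
  set h2 := deriv h1 with hh2_def
  set h3 := deriv h2 with hh3_def
  have hH1c : ContDiffOn ℝ 2 h1 t := hHc.deriv_of_isOpen hto (by norm_num)
  have hH2c : ContDiffOn ℝ 1 h2 t := hH1c.deriv_of_isOpen hto (by norm_num)
  have hH3c0 : ContDiffOn ℝ 0 h3 t := hH2c.deriv_of_isOpen hto (by norm_num)
  have hH3cont : ContinuousOn h3 t := hH3c0.continuousOn
  have hH1d : ∀ x ∈ t, HasDerivAt H (h1 x) x := fun x hx =>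
    ((hHc.differentiableOn (by norm_num)).differentiableAt (hto.mem_nhds hx)).hasDerivAt
  have hH2d : ∀ x ∈ t, HasDerivAt h1 (h2 x) x := fun x hx =>
    ((hH1c.differentiableOn (by norm_num)).differentiableAt (hto.mem_nhds hx)).hasDerivAt
  have hH3d : ∀ x ∈ t, HasDerivAt h2 (h3 x) x := fun x hx =>
    ((hH2c.differentiableOn (by norm_num)).differentiableAt (hto.mem_nhds hx)).hasDerivAt
  obtain ⟨r, hr0, hrt⟩ := Metric.nhds_basis_closedBall.mem_iff.mp (hto.mem_nhds hαt)
  have hballt : Metric.ball α r ⊆ t := fun z hz => hrt (Metric.ball_subset_closedBall hz)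
  have hαball : α ∈ Metric.ball α r := Metric.mem_ball_self hr0
  obtain ⟨M0, hM0⟩ := (isCompact_closedBall α r).exists_bound_of_continuousOn (hH3cont.mono hrt)
  set M := max M0 1 with hM_def
  have hM1 : (0:ℝ) < M := lt_of_lt_of_le one_pos (le_max_right _ _)
  have hb3 : ∀ x ∈ Metric.ball α r, |h3 x| ≤ M * |x - α| ^ 0 := by
    intro x hx
    simp only [pow_zero, mul_one]
    exact le_trans (hM0 x (Metric.ball_subset_closedBall hx)) (le_max_left _ _)
  have step1 : ∀ x ∈ Metric.ball α r, |h2 x| ≤ M * |x - α| ^ 1 := by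
    have h := hn_step (fun x hx => hH3d x (hballt hx)) (hH3cont.mono hballt) hH''α hαball hb3
    intro x hx
    simpa using h x hx
  have step2 : ∀ x ∈ Metric.ball α r, |h1 x| ≤ M / 2 * |x - α| ^ 2 := by
    have h := hn_step (fun x hx => hH2d x (hballt hx)) (hH2c.continuousOn.mono hballt) hH'α hαball step1
    intro x hx
    have := h x hx
    norm_num at this
    rwa [sq_abs]
  have hHα : H α = α := by simp [hH_def, hroot]
  have step3 : ∀ x ∈ Metric.ball α r, |H x - α| ≤ M / 2 / 3 * |x - α| ^ 3 := by
    have h := hn_step (g := fun x => H x - α) (fun x hx => (hH1d x (hballt hx)).sub_const α)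
      (hH1c.continuousOn.mono hballt) (by simp [hHα]) hαball step2
    intro x hx
    have := h x hx
    norm_num at this
    convert this using 2
  refine ⟨Metric.ball α r, Metric.ball_mem_nhds α hr0, M / 2 / 3, by positivity, ?_⟩
  intro x hx _ _
  have := step3 x hx
  simpa only [hH_def, hy_def] using this
end
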